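/- arXiv:1408.3317 — 7 statements merged into one kernel-verified Lean document; each statement's English description precedes it below -/
import Mathlib

section
/- Validity is closed under parts: if k ⊨ g and f ∈ part(x, g), where x is the initial state of k, then k ⊨ f. -/
/-- A Kripke structure with labeled transitions (Kripke-LTS). -/
structure KLTS (P E : Type) where
  X : Type
  L : X → Set P
  T : X → E → X → Prop
  init : X

/-- State-based (Boolean) formulas. -/
inductive BF (P : Type) where
  | tt : BF P
  | ff : BF P
  | atom : P → BF P
  | neg : BF P → BF P
  | and : BF P → BF P → BF P
  | or : BF P → BF P → BF P

/-- Satisfaction of a state-based formula by a label set. -/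
def BSat {P : Type} (A : Set P) : BF P → Prop
  | .tt => True
  | .ff => False
  | .atom p => p ∈ A
  | .neg b => ¬ BSat A b
  | .and b c => BSat A b ∧ BSat A c
  | .or b c => BSat A b ∨ BSat A c

/-- The modal requirement logic F. -/
inductive F (P E : Type) where
  | base : BF P → F P E
  | and : F P E → F P E → F P E
  | or : BF P → F P E → F P E
  | box : E → F P E → F P E
  | dia : E → F P E → F P E
  | inv : F P E → F P E
  | reach : BF P → F P E
  | dlf : F P E

variable {P E : Type}

/-- Reachability (reflexive-transitive closure, ignoring event labels). -/
def KLTS.Star (k : KLTS P E) : k.X → k.X → Prop :=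
  Relation.ReflTransGen (fun a b => ∃ e, k.T a e b)

/-- Validity of a modal formula at a Kripke-LTS. -/
def FSat : KLTS P E → F P E → Prop
  | k, .base b => BSat (k.L k.init) b
  | k, .and f g => FSat k f ∧ FSat k g
  | k, .or b f => BSat (k.L k.init) b ∨ FSat k f
  | k, .box e f => ∀ x', k.T k.init e x' → FSat ⟨k.X, k.L, k.T, x'⟩ f
  | k, .dia e f => ∃ x', k.T k.init e x' ∧ FSat ⟨k.X, k.L, k.T, x'⟩ f
  | k, .inv f => ∀ x', k.Star k.init x' → FSat ⟨k.X, k.L, k.T, x'⟩ f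
  | k, .reach b => ∃ x', k.Star k.init x' ∧ BSat (k.L x') b
  | k, .dlf => ∃ e x', k.T k.init e x'

/-- R is a simulation relation between k' and k. -/
def SimRel (k' k : KLTS P E) (R : k'.X → k.X → Prop) : Prop :=
  ∀ y' y, R y' y → k'.L y' = k.L y ∧
    ∀ e z', k'.T y' e z' → ∃ z, k.T y e z ∧ R z' z

/-- Simulation preorder. -/
def Sim (k' k : KLTS P E) : Prop :=
  ∃ R : k'.X → k.X → Prop, R k'.init k.init ∧ SimRel k' k R

/-- R is a partial bisimulation relation (w.r.t. uncontrollable events U). -/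
def PBisRel (U : Set E) (k' k : KLTS P E) (R : k'.X → k.X → Prop) : Prop :=
  ∀ y' y, R y' y → k'.L y' = k.L y ∧
    (∀ e z', k'.T y' e z' → ∃ z, k.T y e z ∧ R z' z) ∧
    (∀ e z, e ∈ U → k.T y e z → ∃ z', k'.T y' e z' ∧ R z' z)

/-- Partial bisimulation preorder. -/
def PBis (U : Set E) (k' k : KLTS P E) : Prop :=
  ∃ R : k'.X → k.X → Prop, R k'.init k.init ∧ PBisRel U k' k R

/-- The sub-formula relation. -/
inductive SubF : F P E → F P E → Prop where
  | refl (f : F P E) : SubF f f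
  | andL {f g h : F P E} : SubF f g → SubF f (.and g h)
  | andR {f g h : F P E} : SubF f h → SubF f (.and g h)
  | inv {f g : F P E} : SubF f g → SubF f (.inv g)

/-- The state-relative part relation. -/
inductive PartF {X : Type} (L : X → Set P) (x : X) : F P E → F P E → Prop where
  | refl (f : F P E) : PartF L x f f
  | andL {f g h : F P E} : PartF L x f g → PartF L x f (.and g h)
  | andR {f g h : F P E} : PartF L x f h → PartF L x f (.and g h)
  | or {b : BF P} {f g : F P E} : ¬ BSat (L x) b → PartF L x f g → PartF L x f (.or b g)
  | inv {f g : F P E} : PartF L x f g → PartF L x f (.inv g)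

/-- The starting point of synthesis: transition relation over state-formula pairs. -/
inductive Step0 (k : KLTS P E) : k.X × F P E → E → k.X × F P E → Prop where
  | base {x x' : k.X} {e : E} {b : BF P} :
      k.T x e x' → Step0 k (x, .base b) e (x', .base .tt)
  | and_sub {x x' : k.X} {e : E} {f g f' g' : F P E} :
      Step0 k (x, f) e (x', f') → Step0 k (x, g) e (x', g') → SubF g' f' →
      Step0 k (x, .and f g) e (x', f')
  | and_nsub {x x' : k.X} {e : E} {f g f' g' : F P E} :
      Step0 k (x, f) e (x', f') → Step0 k (x, g) e (x', g') → ¬ SubF g' f' →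
      Step0 k (x, .and f g) e (x', .and f' g')
  | or_true {x x' : k.X} {e : E} {b : BF P} {f : F P E} :
      k.T x e x' → BSat (k.L x) b → Step0 k (x, .or b f) e (x', .base .tt)
  | or_step {x x' : k.X} {e : E} {b : BF P} {f f' : F P E} :
      Step0 k (x, f) e (x', f') → Step0 k (x, .or b f) e (x', f')
  | box_same {x x' : k.X} {e : E} {f : F P E} :
      k.T x e x' → Step0 k (x, .box e f) e (x', f)
  | box_other {x x' : k.X} {e e' : E} {f : F P E} :
      k.T x e x' → e ≠ e' → Step0 k (x, .box e' f) e (x', .base .tt)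
  | dia_same {x x' : k.X} {e : E} {f : F P E} :
      k.T x e x' → Step0 k (x, .dia e f) e (x', f)
  | dia_other {x x' : k.X} {e e' : E} {f : F P E} :
      k.T x e x' → Step0 k (x, .dia e' f) e (x', .base .tt)
  | inv_sub {x x' : k.X} {e : E} {f f' : F P E} :
      Step0 k (x, f) e (x', f') → SubF f' (.inv f) →
      Step0 k (x, .inv f) e (x', .inv f)
  | inv_nsub {x x' : k.X} {e : E} {f f' : F P E} :
      Step0 k (x, f) e (x', f') → ¬ SubF f' (.inv f) →
      Step0 k (x, .inv f) e (x', .and (.inv f) f')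
  | reach_true {x x' : k.X} {e : E} {b : BF P} :
      k.T x e x' → Step0 k (x, .reach b) e (x', .base .tt)
  | reach_self {x x' : k.X} {e : E} {b : BF P} :
      k.T x e x' → Step0 k (x, .reach b) e (x', .reach b)
  | dlf {x x' : k.X} {e : E} :
      k.T x e x' → Step0 k (x, .dlf) e (x', .base .tt)

/-- Synthesizability of a formula at a state-formula pair, w.r.t. a relation Tn. -/
inductive Syn (k : KLTS P E) (Tn : k.X × F P E → E → k.X × F P E → Prop) :
    k.X × F P E → F P E → Prop where
  | base {x : k.X} {g : F P E} {b : BF P} :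
      BSat (k.L x) b → Syn k Tn (x, g) (.base b)
  | and {p : k.X × F P E} {f1 f2 : F P E} :
      Syn k Tn p f1 → Syn k Tn p f2 → Syn k Tn p (.and f1 f2)
  | orl {x : k.X} {g : F P E} {b : BF P} {f : F P E} :
      BSat (k.L x) b → Syn k Tn (x, g) (.or b f)
  | orr {p : k.X × F P E} {b : BF P} {f : F P E} :
      Syn k Tn p f → Syn k Tn p (.or b f)
  | box {p : k.X × F P E} {e : E} {f : F P E} : Syn k Tn p (.box e f)
  | dia {x x' : k.X} {g g' : F P E} {e : E} {f : F P E} :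
      Syn k Tn (x', g') f → Tn (x, g) e (x', g') → PartF k.L x' f g' →
      Syn k Tn (x, g) (.dia e f)
  | inv {p : k.X × F P E} {f : F P E} :
      Syn k Tn p f → Syn k Tn p (.inv f)
  | reach {x x' : k.X} {g g' : F P E} {b : BF P} :
      Relation.ReflTransGen (fun a c => ∃ e, Tn a e c) (x, g) (x', g') →
      BSat (k.L x') b → Syn k Tn (x, g) (.reach b)
  | dlf {p p' : k.X × F P E} {e : E} :
      Tn p e p' → Syn k Tn p .dlf

/-- The n-th iterate of the synthesis construction. -/
def StepN (k : KLTS P E) (U : Set E) :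
    ℕ → (k.X × F P E → E → k.X × F P E → Prop)
  | 0 => Step0 k
  | n + 1 => fun p e p' =>
      StepN k U n p e p' ∧ (e ∈ U ∨ Syn k (StepN k U n) p p.2)

/-- The synthesized system model S^n_{k,f}. -/
def Synth (k : KLTS P E) (U : Set E) (f : F P E) (n : ℕ) : KLTS P E :=
  ⟨k.X × F P E, fun p => k.L p.1, StepN k U n, (k.init, f)⟩

/-- Completeness: synthesizability holds at every reachable state-formula pair. -/
def Complete (k : KLTS P E) (U : Set E) (n : ℕ) (f : F P E) : Prop :=
  ∀ p' : k.X × F P E,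
    Relation.ReflTransGen (fun a c => ∃ e, StepN k U n a e c) (k.init, f) p' →
    Syn k (StepN k U n) p' p'.2
/-- Validity is closed under parts. -/
theorem fsat_of_partF {P E : Type} (k : KLTS P E) (f g : F P E)
    (hg : FSat k g) (hp : PartF k.L k.init f g) : FSat k f := by
  induction hp with
  | refl => exact hg
  | andL _ ih => exact ih hg.1
  | andR _ ih => exact ih hg.2
  | or hb _ ih => exact ih (hg.resolve_left hb)
  | inv _ ih => exact ih (hg k.init Relation.ReflTransGen.refl)
end

section
/- Synthesizability is closed under parts: if (x,h) ↑ g and f ∈ part(x, g), then (x,h) ↑ f. -/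
variable {P E : Type}

/-- Synthesizability is closed under parts (Lemma part_syn). -/
theorem syn_of_partF {P E : Type} (k : KLTS P E)
    (Tn : k.X × F P E → E → k.X × F P E → Prop)
    (x : k.X) (h g f : F P E)
    (hs : Syn k Tn (x, h) g) (hp : PartF k.L x f g) : Syn k Tn (x, h) f := by
  induction hp with
  | refl => exact hs
  | andL _ ih => cases hs with | and h1 h2 => exact ih h1
  | andR _ ih => cases hs with | and h1 h2 => exact ih h2
  | or hb _ ih =>
    cases hs with
    | orl hb' => exact absurd hb' hb
    | orr hg => exact ih hg
  | inv _ ih => cases hs with | inv hg => exact ih hg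
end

section
/- The set of formula reducts of any formula f in the requirement logic F, under the formula reduction relation induced by the synthesis starting-point rules, is finite: there exists a finite set D ⊆ F containing f that is closed under reduction. -/
variable {P E : Type}

namespace ReductsAux

variable {P E : Type}

/-- Left-nested conjunction. -/
def nest (f : F P E) (l : List (F P E)) : F P E := l.foldl .and f

/-- Closure set of reducts. -/
def C : F P E → Set (F P E)
  | .base b => {.base b, .base .tt}
  | .and f g => C f ∪ Set.image2 .and (C f) (C g)
  | .or b f => insert (.or b f) (insert (.base .tt) (C f))
  | .box e f => insert (.box e f) (insert (.base .tt) (C f))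
  | .dia e f => insert (.dia e f) (insert (.base .tt) (C f))
  | .inv f => {h | ∃ l : List (F P E), l.Nodup ∧ (∀ a ∈ l, a ∈ C f) ∧ h = nest (.inv f) l}
  | .reach b => {.reach b, .base .tt}
  | .dlf => {.dlf, .base .tt}

theorem nest_append_singleton (f : F P E) (l : List (F P E)) (a : F P E) :
    nest f (l ++ [a]) = .and (nest f l) a := by
  simp [nest, List.foldl_append]

theorem sub_nest {a : F P E} (g : F P E) {l : List (F P E)} (h : a ∈ l) :
    SubF a (nest g l) := by
  induction l using List.reverseRecOn with
  | nil => simp at h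
  | append_singleton l b ih =>
    rw [nest_append_singleton]
    rcases List.mem_append.1 h with h | h
    · exact SubF.andL (ih h)
    · simp at h; subst h; exact SubF.andR (SubF.refl _)

theorem mem_self (f : F P E) : f ∈ C f := by
  induction f with
  | base b => simp [C]
  | and f g ihf ihg => exact Or.inr (Set.mem_image2_of_mem ihf ihg)
  | or b f ih => simp [C]
  | box e f ih => simp [C]
  | dia e f ih => simp [C]
  | inv f ih => exact ⟨[], by simp, by simp, rfl⟩
  | reach b => simp [C]
  | dlf => simp [C]

theorem finite (f : F P E) : (C f).Finite := by
  classical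
  induction f with
  | base b => exact (Set.finite_singleton _).insert _
  | and f g ihf ihg => exact ihf.union (Set.Finite.image2 _ ihf ihg)
  | or b f ih => exact (ih.insert _).insert _
  | box e f ih => exact (ih.insert _).insert _
  | dia e f ih => exact (ih.insert _).insert _
  | inv f ih =>
    haveI : Fintype ↥(C f) := ih.fintype
    apply Set.Finite.subset (Set.finite_range
      (fun l' : {l : List ↥(C f) // l.Nodup} => nest (.inv f) (l'.1.map Subtype.val)))
    rintro g ⟨l, hnd, hmem, rfl⟩
    refine ⟨⟨l.pmap (fun a h => (⟨a, h⟩ : ↥(C f))) hmem, ?_⟩, ?_⟩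
    · exact hnd.pmap (fun a _ b _ h => congrArg Subtype.val h)
    · simp [List.map_pmap]
  | reach b => exact (Set.finite_singleton _).insert _
  | dlf => exact (Set.finite_singleton _).insert _

theorem inv_step {k : KLTS P E} {f : F P E}
    (hcl : ∀ {g : F P E} {x x' : k.X} {e : E} {g' : F P E},
      g ∈ C f → Step0 k (x, g) e (x', g') → g' ∈ C f)
    {x x' : k.X} {e : E} {l : List (F P E)} (hnd : l.Nodup) (hmem : ∀ a ∈ l, a ∈ C f)
    {g' : F P E} (hstep : Step0 k (x, nest (.inv f) l) e (x', g')) :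
    ∃ m : List (F P E), m.Nodup ∧ (∀ a ∈ m, a ∈ C f) ∧ g' = nest (.inv f) m := by
  induction l using List.reverseRecOn generalizing g' with
  | nil =>
    cases hstep with
    | inv_sub h hs => exact ⟨[], by simp, by simp, rfl⟩
    | inv_nsub h hs =>
      exact ⟨[_], by simp, by simpa using hcl (mem_self f) h, rfl⟩
  | append_singleton l a ih =>
    rw [nest_append_singleton] at hstep
    have hnd' : l.Nodup := (List.nodup_append.1 hnd).1
    have hmem' : ∀ b ∈ l, b ∈ C f := fun b hb => hmem b (by simp [hb])
    cases hstep with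
    | and_sub h1 h2 hs => exact ih hnd' hmem' h1
    | and_nsub h1 h2 hns =>
      obtain ⟨m, hm1, hm2, rfl⟩ := ih hnd' hmem' h1
      have ha : a ∈ C f := hmem a (by simp)
      have hg2 := hcl ha h2
      refine ⟨m ++ [_], ?_, ?_, (nest_append_singleton _ _ _).symm⟩
      · rw [List.nodup_append]
        refine ⟨hm1, by simp, ?_⟩
        intro b hb c hc hbc
        simp at hc
        subst hc
        subst hbc
        exact hns (sub_nest _ hb)
      · intro b hb
        rcases List.mem_append.1 hb with hb | hb
        · exact hm2 b hb
        · simp at hb; subst hb; exact hg2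

theorem closed {k : KLTS P E} : ∀ (f : F P E) {g : F P E} {x x' : k.X} {e : E} {g' : F P E},
    g ∈ C f → Step0 k (x, g) e (x', g') → g' ∈ C f := by
  intro f
  induction f with
  | base b =>
    rintro g x x' e g' (rfl | rfl) hstep <;> cases hstep <;> simp [C]
  | and f1 f2 ih1 ih2 =>
    rintro g x x' e g' (hg | hg) hstep
    · exact Or.inl (ih1 hg hstep)
    · obtain ⟨a, ha, b, hb, rfl⟩ := hg
      cases hstep with
      | and_sub h1 h2 hs => exact Or.inl (ih1 ha h1)
      | and_nsub h1 h2 hns => exact Or.inr (Set.mem_image2_of_mem (ih1 ha h1) (ih2 hb h2))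
  | or b f ih =>
    rintro g x x' e g' (rfl | rfl | hg) hstep
    · cases hstep with
      | or_true h hb => simp [C]
      | or_step h => exact Or.inr (Or.inr (ih (mem_self f) h))
    · cases hstep; simp [C]
    · exact Or.inr (Or.inr (ih hg hstep))
  | box e0 f ih =>
    rintro g x x' e g' (rfl | rfl | hg) hstep
    · cases hstep with
      | box_same h => exact Or.inr (Or.inr (mem_self f))
      | box_other h hne => simp [C]
    · cases hstep; simp [C]
    · exact Or.inr (Or.inr (ih hg hstep))
  | dia e0 f ih =>
    rintro g x x' e g' (rfl | rfl | hg) hstep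
    · cases hstep with
      | dia_same h => exact Or.inr (Or.inr (mem_self f))
      | dia_other h => simp [C]
    · cases hstep; simp [C]
    · exact Or.inr (Or.inr (ih hg hstep))
  | inv f ih =>
    rintro g x x' e g' hg hstep
    obtain ⟨l, hnd, hmem, rfl⟩ := hg
    exact inv_step (fun hg hs => ih hg hs) hnd hmem hstep
  | reach b =>
    rintro g x x' e g' (rfl | rfl) hstep <;> cases hstep <;> simp [C]
  | dlf =>
    rintro g x x' e g' (rfl | rfl) hstep <;> cases hstep <;> simp [C]

end ReductsAux

/-- Every formula has a finite, reduction-closed set of reducts. -/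
theorem reducts_finite {P E : Type} (k : KLTS P E) (f : F P E) :
    ∃ D : Set (F P E), D.Finite ∧ f ∈ D ∧
      ∀ g ∈ D, ∀ (x x' : k.X) (e : E) (g' : F P E),
        Step0 k (x, g) e (x', g') → g' ∈ D := by
  exact ⟨ReductsAux.C f, ReductsAux.finite f, ReductsAux.mem_self f,
    fun g hg x x' e g' hstep => ReductsAux.closed f hg hstep⟩
end

section
/- Uncontrollable transitions are never removed by synthesis: if (x,f) ↑ f and x →_e x' with e uncontrollable, then there exists f' such that (x,f) →_n^e (x',f') for all n ∈ ℕ. -/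
variable {P E : Type}

lemma step0_total {P E : Type} (k : KLTS P E) {x x' : k.X} {e : E}
    (hstep : k.T x e x') : ∀ f : F P E, ∃ f', Step0 k (x, f) e (x', f') := by
  intro f
  induction f with
  | base b => exact ⟨_, .base hstep⟩
  | and f g ihf ihg =>
    obtain ⟨f', hf⟩ := ihf
    obtain ⟨g', hg⟩ := ihg
    by_cases h : SubF g' f'
    · exact ⟨_, .and_sub hf hg h⟩
    · exact ⟨_, .and_nsub hf hg h⟩
  | or b f ih =>
    obtain ⟨f', hf⟩ := ih
    exact ⟨_, .or_step hf⟩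
  | box e' f ih =>
    by_cases h : e = e'
    · subst h; exact ⟨_, .box_same hstep⟩
    · exact ⟨_, .box_other hstep h⟩
  | dia e' f ih => exact ⟨_, .dia_other hstep⟩
  | inv f ih =>
    obtain ⟨f', hf⟩ := ih
    by_cases h : SubF f' (.inv f)
    · exact ⟨_, .inv_sub hf h⟩
    · exact ⟨_, .inv_nsub hf h⟩
  | reach b => exact ⟨_, .reach_true hstep⟩
  | dlf => exact ⟨_, .dlf hstep⟩

/-- Uncontrollable transitions are never removed (Lemma syn_impl_rel). -/
theorem uncontrollable_persist {P E : Type} (k : KLTS P E) (U : Set E)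
    (x x' : k.X) (e : E) (f : F P E)
    (hsyn : Syn k (Step0 k) (x, f) f) (hstep : k.T x e x') (he : e ∈ U) :
    ∃ f' : F P E, ∀ n : ℕ, StepN k U n (x, f) e (x', f') := by
  obtain ⟨f', hf⟩ := step0_total k hstep f
  refine ⟨f', fun n => ?_⟩
  induction n with
  | zero => exact hf
  | succ n ih => exact ⟨ih, Or.inl he⟩
end

section
/- Validity of a complete synthesis result (Theorem val): if the n-th synthesis iterate S^n_{k,f} is complete, then S^n_{k,f} ⊨ f. More generally, if S^n_{k,g} is complete and f ∈ part(x, g), then S^n_{k,g} ⊨ f. -/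
variable {P E : Type}

lemma partF_comp {X : Type} {L : X → Set P} {x : X} {f g h : F P E}
    (h1 : PartF L x f g) (h2 : PartF L x g h) : PartF L x f h := by
  induction h2 with
  | refl => exact h1
  | andL _ ih => exact .andL (ih h1)
  | andR _ ih => exact .andR (ih h1)
  | or hb _ ih => exact .or hb (ih h1)
  | inv _ ih => exact .inv (ih h1)

lemma subF_partF {X : Type} {L : X → Set P} {x : X} {f g : F P E}
    (h : SubF f g) : PartF L x f g := by
  induction h with
  | refl => exact .refl _
  | andL _ ih => exact .andL ih
  | andR _ ih => exact .andR ih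
  | inv _ ih => exact .inv ih

lemma syn_part {k : KLTS P E} {Tn : k.X × F P E → E → k.X × F P E → Prop}
    {p : k.X × F P E} {f g : F P E}
    (hp : PartF k.L p.1 f g) : Syn k Tn p g → Syn k Tn p f := by
  induction hp with
  | refl => exact id
  | andL _ ih => intro hs; cases hs with | and h1 h2 => exact ih h1
  | andR _ ih => intro hs; cases hs with | and h1 h2 => exact ih h2
  | or hb _ ih =>
      intro hs
      cases hs with
      | orl hb' => exact absurd hb' hb
      | orr h1 => exact ih h1
  | inv _ ih => intro hs; cases hs with | inv h1 => exact ih h1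

lemma stepN_step0 {k : KLTS P E} {U : Set E} :
    ∀ (n : ℕ) {p : k.X × F P E} {e : E} {p' : k.X × F P E},
      StepN k U n p e p' → Step0 k p e p'
  | 0, _, _, _, h => h
  | n + 1, _, _, _, h => stepN_step0 n h.1

lemma step_part {k : KLTS P E} {p p' : k.X × F P E} {e : E}
    (hs : Step0 k p e p') (f : F P E) :
    (PartF k.L p.1 (.box e f) p.2 → PartF k.L p'.1 f p'.2) ∧
    (PartF k.L p.1 (.inv f) p.2 → PartF k.L p'.1 (.inv f) p'.2) := by
  induction hs with
  | base hT => exact ⟨(fun hp => by cases hp), (fun hp => by cases hp)⟩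
  | and_sub h1 h2 hsub ih1 ih2 =>
      constructor
      · intro hp
        cases hp with
        | andL hp1 => exact ih1.1 hp1
        | andR hp2 => exact partF_comp (ih2.1 hp2) (subF_partF hsub)
      · intro hp
        cases hp with
        | andL hp1 => exact ih1.2 hp1
        | andR hp2 => exact partF_comp (ih2.2 hp2) (subF_partF hsub)
  | and_nsub h1 h2 hnsub ih1 ih2 =>
      constructor
      · intro hp
        cases hp with
        | andL hp1 => exact .andL (ih1.1 hp1)
        | andR hp2 => exact .andR (ih2.1 hp2)
      · intro hp
        cases hp with
        | andL hp1 => exact .andL (ih1.2 hp1)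
        | andR hp2 => exact .andR (ih2.2 hp2)
  | or_true hT hb =>
      constructor
      · intro hp; cases hp with
        | or hnb _ => exact absurd hb hnb
      · intro hp; cases hp with
        | or hnb _ => exact absurd hb hnb
  | or_step h1 ih1 =>
      constructor
      · intro hp; cases hp with
        | or hnb hp1 => exact ih1.1 hp1
      · intro hp; cases hp with
        | or hnb hp1 => exact ih1.2 hp1
  | box_same hT =>
      constructor
      · intro hp; cases hp with
        | refl => exact .refl _
      · intro hp; cases hp
  | box_other hT hne =>
      constructor
      · intro hp; cases hp with
        | refl => exact absurd rfl hne
      · intro hp; cases hp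
  | dia_same hT => exact ⟨(fun hp => by cases hp), (fun hp => by cases hp)⟩
  | dia_other hT => exact ⟨(fun hp => by cases hp), (fun hp => by cases hp)⟩
  | inv_sub h1 hsub ih1 =>
      constructor
      · intro hp; cases hp with
        | inv hp1 => exact partF_comp (ih1.1 hp1) (subF_partF hsub)
      · intro hp; cases hp with
        | refl => exact .refl _
        | inv hp1 => exact partF_comp (ih1.2 hp1) (subF_partF hsub)
  | inv_nsub h1 hnsub ih1 =>
      constructor
      · intro hp; cases hp with
        | inv hp1 => exact .andR (ih1.1 hp1)
      · intro hp; cases hp with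
        | refl => exact .andL (.refl _)
        | inv hp1 => exact .andR (ih1.2 hp1)
  | reach_true hT => exact ⟨(fun hp => by cases hp), (fun hp => by cases hp)⟩
  | reach_self hT => exact ⟨(fun hp => by cases hp), (fun hp => by cases hp)⟩
  | dlf hT => exact ⟨(fun hp => by cases hp), (fun hp => by cases hp)⟩

lemma starInvPart {k : KLTS P E} {U : Set E} {n : ℕ} {f : F P E}
    {p q : k.X × F P E}
    (h : Relation.ReflTransGen (fun a c => ∃ e, StepN k U n a e c) p q)
    (hp : PartF k.L p.1 (.inv f) p.2) : PartF k.L q.1 (.inv f) q.2 := by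
  induction h with
  | refl => exact hp
  | tail _ hstep ih =>
      obtain ⟨e, hs⟩ := hstep
      exact (step_part (stepN_step0 n hs) f).2 ih

lemma valid_main {k : KLTS P E} {U : Set E} {n : ℕ} {g : F P E}
    (hc : Complete k U n g) (f : F P E) :
    ∀ p : k.X × F P E,
      Relation.ReflTransGen (fun a c => ∃ e, StepN k U n a e c) (k.init, g) p →
      PartF k.L p.1 f p.2 →
      FSat (⟨k.X × F P E, fun q => k.L q.1, StepN k U n, p⟩ : KLTS P E) f := by
  induction f with
  | base b =>
      intro p hr hp
      have hs := syn_part hp (hc p hr)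
      cases hs with
      | base hb => exact hb
  | and f1 f2 ih1 ih2 =>
      intro p hr hp
      exact ⟨ih1 p hr (partF_comp (.andL (.refl _)) hp),
             ih2 p hr (partF_comp (.andR (.refl _)) hp)⟩
  | or b f ih =>
      intro p hr hp
      by_cases hb : BSat (k.L p.1) b
      · exact Or.inl hb
      · exact Or.inr (ih p hr (partF_comp (.or hb (.refl _)) hp))
  | box e f ih =>
      intro p hr hp
      intro p' hT
      exact ih p' (hr.tail ⟨e, hT⟩) ((step_part (stepN_step0 n hT) f).1 hp)
  | dia e f ih =>
      intro p hr hp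
      have hs := syn_part hp (hc p hr)
      cases hs with
      | dia hsyn hT hpart =>
          exact ⟨_, hT, ih _ (hr.tail ⟨e, hT⟩) hpart⟩
  | inv f ih =>
      intro p hr hp
      intro p' hstar
      have hstar' : Relation.ReflTransGen
          (fun a c => ∃ e, StepN k U n a e c) p p' := hstar
      have hp' := starInvPart hstar' hp
      exact ih p' (hr.trans hstar') (partF_comp (.inv (.refl f)) hp')
  | reach b =>
      intro p hr hp
      have hs := syn_part hp (hc p hr)
      cases hs with
      | reach hstar hb => exact ⟨_, hstar, hb⟩
  | dlf =>
      intro p hr hp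
      have hs := syn_part hp (hc p hr)
      cases hs with
      | dlf hT => exact ⟨_, _, hT⟩

/-- Validity of a complete synthesis result (Theorem val). -/
theorem synthesis_valid {P E : Type} (k : KLTS P E) (U : Set E) (n : ℕ) :
    (∀ f : F P E, Complete k U n f → FSat (Synth k U f n) f) ∧
      (∀ f g : F P E, Complete k U n g → PartF k.L k.init f g →
        FSat (Synth k U g n) f) := by
  refine ⟨fun f hc => ?_, fun f g hc hp => ?_⟩
  · exact valid_main hc f (k.init, f) .refl (.refl f)
  · exact valid_main hc f (k.init, g) .refl hp
end

section
/- Step matching for valid simulants (Lemma step_val): if k' ≼ k, k' ⊨ f, x' →'_e y' and x →_e y (with x', x the respective initial states and the two steps related by the simulation), then there exists f' ∈ F such that (X',L',→',y') ⊨ f' and (x,f) →_0^e (y,f'). -/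
variable {P E : Type}

/-- Step matching for valid simulants (Lemma step_val). -/
theorem step_val {P E : Type} (k' k : KLTS P E) (R : k'.X → k.X → Prop)
    (hR : SimRel k' k R) (hinit : R k'.init k.init)
    (f : F P E) (hv : FSat k' f)
    (e : E) (y' : k'.X) (y : k.X)
    (hstep' : k'.T k'.init e y') (hstep : k.T k.init e y) (hRy : R y' y) :
    ∃ f' : F P E, FSat ⟨k'.X, k'.L, k'.T, y'⟩ f' ∧
      Step0 k (k.init, f) e (y, f') := by
  induction f with
  | base b => exact ⟨.base .tt, trivial, .base hstep⟩
  | and f g ihf ihg =>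
    obtain ⟨hf, hg⟩ := hv
    obtain ⟨f', hf', sf⟩ := ihf hf
    obtain ⟨g', hg', sg⟩ := ihg hg
    by_cases hs : SubF g' f'
    · exact ⟨f', hf', .and_sub sf sg hs⟩
    · exact ⟨.and f' g', ⟨hf', hg'⟩, .and_nsub sf sg hs⟩
  | or b f ih =>
    rcases hv with hb | hf
    · refine ⟨.base .tt, trivial, .or_true hstep ?_⟩
      rwa [← (hR _ _ hinit).1]
    · obtain ⟨f', hf', s⟩ := ih hf
      exact ⟨f', hf', .or_step s⟩
  | box e' f ih =>
    by_cases he : e = e'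
    · subst he
      exact ⟨f, hv y' hstep', .box_same hstep⟩
    · exact ⟨.base .tt, trivial, .box_other hstep he⟩
  | dia e' f ih => exact ⟨.base .tt, trivial, .dia_other hstep⟩
  | inv f ih =>
    have hf0 : FSat k' f := hv k'.init Relation.ReflTransGen.refl
    obtain ⟨f', hf', s⟩ := ih hf0
    have hinv : FSat ⟨k'.X, k'.L, k'.T, y'⟩ (.inv f) := by
      intro z hz
      exact hv z (Relation.ReflTransGen.head ⟨e, hstep'⟩ hz)
    by_cases hs : SubF f' (.inv f)
    · exact ⟨.inv f, hinv, .inv_sub s hs⟩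
    · exact ⟨.and (.inv f) f', ⟨hinv, hf'⟩, .inv_nsub s hs⟩
  | reach b => exact ⟨.base .tt, trivial, .reach_true hstep⟩
  | dlf => exact ⟨.base .tt, trivial, .dlf hstep⟩
end

section
/- Maximal permissiveness of synthesis (Theorem max): if k' ≼ k and k' ⊨ f, then k' ≼ S^n_{k,f} for every n. That is, every simulant of the plant satisfying the requirement is simulated by the synthesis result. -/
variable {P E : Type}

section Aux

variable {P E : Type}

/-- Satisfaction of a formula at a particular state of a KLTS. -/
def FS (k' : KLTS P E) (y : k'.X) (g : F P E) : Prop :=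
  FSat ⟨k'.X, k'.L, k'.T, y⟩ g

theorem PartF_trans {X : Type} {L : X → Set P} {x : X} {a b c : F P E}
    (h1 : PartF L x a b) (h2 : PartF L x b c) : PartF L x a c := by
  induction h2 generalizing a with
  | refl => exact h1
  | andL _ ih => exact .andL (ih h1)
  | andR _ ih => exact .andR (ih h1)
  | or hb _ ih => exact .or hb (ih h1)
  | inv _ ih => exact .inv (ih h1)

theorem SubF_toPartF {X : Type} {L : X → Set P} {x : X} {a b : F P E}
    (h : SubF a b) : PartF L x a b := by
  induction h with
  | refl => exact .refl _
  | andL _ ih => exact .andL ih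
  | andR _ ih => exact .andR ih
  | inv _ ih => exact .inv ih

variable {k' k : KLTS P E} {R : k'.X → k.X → Prop}

/-- Step-matching at level 0 (plain reduct lemma). -/
theorem reduct0 (hR : SimRel k' k R) {y' : k'.X} {y : k.X} {z' : k'.X} {z : k.X}
    {e : E} (hy : R y' y) (hz : R z' z) (ht' : k'.T y' e z') (ht : k.T y e z) :
    ∀ g : F P E, FS k' y' g → ∃ g', Step0 k (y, g) e (z, g') ∧ FS k' z' g' := by
  intro g
  induction g with
  | base b => exact fun _ => ⟨.base .tt, .base ht, trivial⟩
  | and f g ihf ihg =>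
    intro hfs
    obtain ⟨hf, hg⟩ := hfs
    obtain ⟨f', hsf, hff⟩ := ihf hf
    obtain ⟨g', hsg, hgg⟩ := ihg hg
    by_cases hsub : SubF g' f'
    · exact ⟨f', .and_sub hsf hsg hsub, hff⟩
    · exact ⟨.and f' g', .and_nsub hsf hsg hsub, hff, hgg⟩
  | or b f ihf =>
    intro hfs
    by_cases hb : BSat (k.L y) b
    · exact ⟨.base .tt, .or_true ht hb, trivial⟩
    · have hf : FS k' y' f := by
        rcases hfs with h | h
        · exact absurd (((hR y' y hy).1) ▸ h) hb
        · exact h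
      obtain ⟨f', hsf, hff⟩ := ihf hf
      exact ⟨f', .or_step hsf, hff⟩
  | box e' f _ =>
    intro hfs
    by_cases he : e = e'
    · subst he
      exact ⟨f, .box_same ht, hfs z' ht'⟩
    · exact ⟨.base .tt, .box_other ht he, trivial⟩
  | dia e' f _ =>
    exact fun _ => ⟨.base .tt, .dia_other ht, trivial⟩
  | inv f ihf =>
    intro hfs
    have hinv : FS k' z' (.inv f) := by
      intro x' hstar
      exact hfs x' (Relation.ReflTransGen.head ⟨e, ht'⟩ hstar)
    obtain ⟨f', hsf, hff⟩ := ihf (hfs y' .refl)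
    by_cases hsub : SubF f' (.inv f)
    · exact ⟨.inv f, .inv_sub hsf hsub, hinv⟩
    · exact ⟨.and (.inv f) f', .inv_nsub hsf hsub, hinv, hff⟩
  | reach b =>
    exact fun _ => ⟨.base .tt, .reach_true ht, trivial⟩
  | dlf =>
    exact fun _ => ⟨.base .tt, .dlf ht, trivial⟩

/-- Step-matching at level 0, preserving a diamond part. -/
theorem reductPart0Aux (hR : SimRel k' k R) {y' : k'.X} {y : k.X} {z' : k'.X}
    {z : k.X} {e : E} (hy : R y' y) (hz : R z' z) (ht' : k'.T y' e z')
    (ht : k.T y e z) {h : F P E} {d g : F P E}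
    (hp : PartF k.L y d g) (hd : d = .dia e h) (hfh : FS k' z' h) :
    FS k' y' g →
    ∃ g', Step0 k (y, g) e (z, g') ∧ FS k' z' g' ∧ PartF k.L z h g' := by
  induction hp with
  | refl =>
    intro _
    subst hd
    exact ⟨h, .dia_same ht, hfh, .refl h⟩
  | andL _ ih =>
    rintro ⟨hf1, hg2⟩
    obtain ⟨g1', hs1, hfs1, hp1⟩ := ih hd hf1
    obtain ⟨g2', hs2, hfs2⟩ := reduct0 hR hy hz ht' ht _ hg2
    by_cases hsub : SubF g2' g1'
    · exact ⟨g1', .and_sub hs1 hs2 hsub, hfs1, hp1⟩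
    · exact ⟨.and g1' g2', .and_nsub hs1 hs2 hsub, ⟨hfs1, hfs2⟩, .andL hp1⟩
  | andR _ ih =>
    rintro ⟨hg1, hf2⟩
    obtain ⟨g2', hs2, hfs2, hp2⟩ := ih hd hf2
    obtain ⟨g1', hs1, hfs1⟩ := reduct0 hR hy hz ht' ht _ hg1
    by_cases hsub : SubF g2' g1'
    · exact ⟨g1', .and_sub hs1 hs2 hsub, hfs1,
        PartF_trans hp2 (SubF_toPartF hsub)⟩
    · exact ⟨.and g1' g2', .and_nsub hs1 hs2 hsub, ⟨hfs1, hfs2⟩, .andR hp2⟩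
  | or hb _ ih =>
    intro hfs
    rcases hfs with hh | hh
    · exact absurd (((hR y' y hy).1) ▸ hh) hb
    · obtain ⟨g', hs, hfs', hp'⟩ := ih hd hh
      exact ⟨g', .or_step hs, hfs', hp'⟩
  | @inv _ f2 _ ih =>
    intro hfs
    have hinv : FS k' z' (.inv f2) := fun x' hstar =>
      hfs x' (Relation.ReflTransGen.head ⟨e, ht'⟩ hstar)
    obtain ⟨g', hs, hfs', hp'⟩ := ih hd (hfs y' .refl)
    by_cases hsub : SubF g' (.inv f2)
    · exact ⟨.inv f2, .inv_sub hs hsub, hinv,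
        PartF_trans hp' (SubF_toPartF hsub)⟩
    · exact ⟨.and (.inv f2) g', .inv_nsub hs hsub, ⟨hinv, hfs'⟩, .andR hp'⟩

/-- Step-matching at level 0, preserving a diamond part (wrapper). -/
theorem reductPart0 (hR : SimRel k' k R) {y' : k'.X} {y : k.X} {z' : k'.X}
    {z : k.X} {e : E} (hy : R y' y) (hz : R z' z) (ht' : k'.T y' e z')
    (ht : k.T y e z) {h : F P E} {g : F P E}
    (hp : PartF k.L y (.dia e h) g) (hfs : FS k' y' g) (hfh : FS k' z' h) :
    ∃ g', Step0 k (y, g) e (z, g') ∧ FS k' z' g' ∧ PartF k.L z h g' :=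
  reductPart0Aux hR hy hz ht' ht hp rfl hfh hfs

/-- Step-matching property at level n. -/
def MatchP (k' k : KLTS P E) (R : k'.X → k.X → Prop) (U : Set E) (n : ℕ) : Prop :=
  ∀ y' y (g : F P E) e z', R y' y → FS k' y' g → k'.T y' e z' →
    ∃ z g', StepN k U n (y, g) e (z, g') ∧ R z' z ∧ FS k' z' g'

/-- Part-preserving step-matching property at level n. -/
def MatchPartP (k' k : KLTS P E) (R : k'.X → k.X → Prop) (U : Set E) (n : ℕ) : Prop :=
  ∀ y' y (g : F P E) e z' (h : F P E), R y' y → FS k' y' g → k'.T y' e z' →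
    PartF k.L y (.dia e h) g → FS k' z' h →
    ∃ z g', StepN k U n (y, g) e (z, g') ∧ R z' z ∧ FS k' z' g' ∧
      PartF k.L z h g'

/-- Lifting of reachability paths to the synthesized system. -/
theorem starLift (hR : SimRel k' k R) {U : Set E} {n : ℕ}
    (hm : MatchP k' k R U n) {a' b' : k'.X}
    (hstar : Relation.ReflTransGen (fun a b => ∃ e, k'.T a e b) a' b') :
    ∀ y (g : F P E), R a' y → FS k' a' g →
      ∃ (x : k.X) (g2 : F P E),
        Relation.ReflTransGen (fun p q => ∃ e, StepN k U n p e q) (y, g) (x, g2)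
          ∧ R b' x := by
  induction hstar using Relation.ReflTransGen.head_induction_on with
  | refl => exact fun y g hy _ => ⟨y, g, .refl, hy⟩
  | head hstep _ ih =>
    intro y g hy hg
    obtain ⟨e, ht'⟩ := hstep
    obtain ⟨z, g', hst, hz, hfs⟩ := hm _ _ g e _ hy hg ht'
    obtain ⟨x, g2, hrtg, hx⟩ := ih z g' hz hfs
    exact ⟨x, g2, Relation.ReflTransGen.head ⟨e, hst⟩ hrtg, hx⟩

/-- Synthesizability of satisfied parts, at level n. -/
theorem synN (hR : SimRel k' k R) {U : Set E} {n : ℕ}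
    (hm : MatchP k' k R U n) (hmp : MatchPartP k' k R U n) :
    ∀ (f : F P E) y' y (g : F P E), R y' y → FS k' y' g → FS k' y' f →
      PartF k.L y f g → Syn k (StepN k U n) (y, g) f := by
  intro f
  induction f with
  | base b =>
    intro y' y g hy _ hf _
    exact .base (((hR y' y hy).1) ▸ hf)
  | and f1 f2 ih1 ih2 =>
    intro y' y g hy hg hf hp
    exact .and
      (ih1 y' y g hy hg hf.1 (PartF_trans (.andL (.refl f1)) hp))
      (ih2 y' y g hy hg hf.2 (PartF_trans (.andR (.refl f2)) hp))
  | or b f1 ih =>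
    intro y' y g hy hg hf hp
    by_cases hb : BSat (k.L y) b
    · exact .orl hb
    · have hf1 : FS k' y' f1 := by
        rcases hf with hh | hh
        · exact absurd (((hR y' y hy).1) ▸ hh) hb
        · exact hh
      exact .orr (ih y' y g hy hg hf1 (PartF_trans (.or hb (.refl f1)) hp))
  | box e f1 _ =>
    intro _ _ _ _ _ _ _
    exact .box
  | dia e h ih =>
    intro y' y g hy hg hf hp
    obtain ⟨z', ht', hfh⟩ := hf
    obtain ⟨z, g', hst, hz, hfsg, hpart⟩ := hmp y' y g e z' h hy hg ht' hp hfh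
    exact .dia (ih z' z g' hz hfsg hfh hpart) hst hpart
  | inv f1 ih =>
    intro y' y g hy hg hf hp
    exact .inv (ih y' y g hy hg (hf y' .refl)
      (PartF_trans (.inv (.refl f1)) hp))
  | reach b =>
    intro y' y g hy hg hf _
    obtain ⟨x', hstar, hb⟩ := hf
    obtain ⟨x, g2, hrtg, hx⟩ := starLift hR hm hstar y g hy hg
    exact .reach hrtg (((hR x' x hx).1) ▸ hb)
  | dlf =>
    intro y' y g hy hg hf _
    obtain ⟨e, z', ht'⟩ := hf
    obtain ⟨z, g', hst, _, _⟩ := hm y' y g e z' hy hg ht'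
    exact .dlf hst

/-- The matching lemmas hold at every level n. -/
theorem matchLevel (hR : SimRel k' k R) (U : Set E) :
    ∀ n : ℕ, MatchP k' k R U n ∧ MatchPartP k' k R U n := by
  intro n
  induction n with
  | zero =>
    constructor
    · intro y' y g e z' hy hg ht'
      obtain ⟨z, ht, hz⟩ := (hR y' y hy).2 e z' ht'
      obtain ⟨g', hs, hfs⟩ := reduct0 hR hy hz ht' ht g hg
      exact ⟨z, g', hs, hz, hfs⟩
    · intro y' y g e z' h hy hg ht' hp hfh
      obtain ⟨z, ht, hz⟩ := (hR y' y hy).2 e z' ht'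
      obtain ⟨g', hs, hfs, hpart⟩ := reductPart0 hR hy hz ht' ht hp hg hfh
      exact ⟨z, g', hs, hz, hfs, hpart⟩
  | succ n ih =>
    obtain ⟨hm, hmp⟩ := ih
    have hsyn := synN hR hm hmp
    constructor
    · intro y' y g e z' hy hg ht'
      obtain ⟨z, g', hst, hz, hfs⟩ := hm y' y g e z' hy hg ht'
      exact ⟨z, g', ⟨hst, Or.inr (hsyn g y' y g hy hg hg (.refl g))⟩, hz, hfs⟩
    · intro y' y g e z' h hy hg ht' hp hfh
      obtain ⟨z, g', hst, hz, hfs, hpart⟩ := hmp y' y g e z' h hy hg ht' hp hfh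
      exact ⟨z, g', ⟨hst, Or.inr (hsyn g y' y g hy hg hg (.refl g))⟩,
        hz, hfs, hpart⟩

end Aux

/-- Maximal permissiveness of synthesis (Theorem max). -/
theorem synthesis_maximal {P E : Type} (k' k : KLTS P E) (U : Set E)
    (f : F P E) (hsim : Sim k' k) (hv : FSat k' f) :
    ∀ n : ℕ, Sim k' (Synth k U f n) := by
  obtain ⟨R, hinit, hR⟩ := hsim
  intro n
  obtain ⟨hm, _⟩ := matchLevel hR U n
  refine ⟨fun y' p => R y' p.1 ∧ FS k' y' p.2, ⟨hinit, hv⟩, ?_⟩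
  rintro y' ⟨y, g⟩ ⟨hy, hg⟩
  refine ⟨(hR y' y hy).1, ?_⟩
  intro e z' ht'
  obtain ⟨z, g', hst, hz, hfs⟩ := hm y' y g e z' hy hg ht'
  exact ⟨(z, g'), hst, hz, hfs⟩
end
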